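/- Let b, C > 0 and N ∈ ℕ. Let (x_j)_{j=1}^N and (f_j)_{j=1}^N be sequences in a complex Hilbert space H such that ‖x_j‖·‖f_j‖ ≥ b for all 1 ≤ j ≤ N, and such that ‖Σ_{j=1}^N ε_j ⟨x, f_j⟩ x_j‖ ≤ C‖x‖ for all x ∈ H and all scalars ε_1,...,ε_N with |ε_j| = 1. Set d_j = ‖x_j‖^{-1/2} ‖f_j‖^{1/2} for 1 ≤ j ≤ N. Then both (d_j x_j)_{j=1}^N and (d_j^{-1} f_j)_{j=1}^N are Bessel with Bessel bound b^{-1} C². -/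

import Mathlib

open scoped ComplexInnerProductSpace
open Finset


noncomputable def sgn' (t : Bool) : ℂ := if t then 1 else -1

lemma sgn'_mul_self (t : Bool) : sgn' t * sgn' t = 1 := by cases t <;> simp [sgn']
lemma sgn'_norm (t : Bool) : ‖sgn' t‖ = 1 := by cases t <;> simp [sgn']
lemma sgn'_not (t : Bool) : sgn' (!t) = - sgn' t := by cases t <;> simp [sgn']
lemma sgn'_conj (t : Bool) : (starRingEnd ℂ) (sgn' t) = sgn' t := by cases t <;> simp [sgn']

lemma sgn'_orth (N : ℕ) (j k : Fin N) :
    ∑ b : Fin N → Bool, sgn' (b j) * sgn' (b k) = if j = k then (2 ^ N : ℂ) else 0 := by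
  rcases eq_or_ne j k with rfl | hjk
  · simp [sgn'_mul_self, Finset.card_univ]
  · simp only [if_neg hjk]
    have hinv : Function.Involutive (fun b : Fin N → Bool => Function.update b j (!(b j))) := by
      intro b; funext i
      by_cases h : i = j
      · subst h; simp
      · simp [Function.update_of_ne h]
    set F : (Fin N → Bool) → ℂ := fun b => sgn' (b j) * sgn' (b k) with hF
    have key : ∀ b : Fin N → Bool, F (Function.update b j (!(b j))) = -(F b) := by
      intro b
      simp only [hF, Function.update_self, Function.update_of_ne (Ne.symm hjk), sgn'_not]
      ring
    have h1 : ∑ b, F b = ∑ b, F ((hinv.toPerm _) b) :=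
      (Equiv.sum_comp (hinv.toPerm _) F).symm
    simp only [Function.Involutive.coe_toPerm] at h1
    simp only [key, Finset.sum_neg_distrib] at h1
    have h2 : (∑ b, F b) + (∑ b, F b) = 0 := by linear_combination h1
    exact add_self_eq_zero.mp h2

lemma sign_avg {H : Type*} [NormedAddCommGroup H] [InnerProductSpace ℂ H]
    (N : ℕ) (w : Fin N → H) :
    ∑ b : Fin N → Bool, ‖∑ j, sgn' (b j) • w j‖ ^ 2 = 2 ^ N * ∑ j, ‖w j‖ ^ 2 := by
  have expand : ∀ b : Fin N → Bool,
      (⟪∑ j, sgn' (b j) • w j, ∑ k, sgn' (b k) • w k⟫ : ℂ)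
        = ∑ j, ∑ k, (sgn' (b j) * sgn' (b k)) * ⟪w j, w k⟫ := by
    intro b
    rw [sum_inner]
    refine Finset.sum_congr rfl fun j _ => ?_
    rw [inner_sum]
    refine Finset.sum_congr rfl fun k _ => ?_
    rw [inner_smul_left, inner_smul_right, sgn'_conj]; ring
  have hsum : ∑ b : Fin N → Bool, (⟪∑ j, sgn' (b j) • w j, ∑ j, sgn' (b j) • w j⟫ : ℂ)
      = (2 ^ N : ℂ) * ∑ j, ⟪w j, w j⟫ := by
    simp only [expand]
    rw [Finset.sum_comm]
    rw [Finset.mul_sum]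
    refine Finset.sum_congr rfl fun j _ => ?_
    rw [Finset.sum_comm]
    simp only [← Finset.sum_mul, sgn'_orth]
    simp
  calc ∑ b : Fin N → Bool, ‖∑ j, sgn' (b j) • w j‖ ^ 2
      = ∑ b : Fin N → Bool,
        (⟪∑ j, sgn' (b j) • w j, ∑ j, sgn' (b j) • w j⟫ : ℂ).re := by
        refine Finset.sum_congr rfl fun b _ => ?_
        exact norm_sq_eq_re_inner (𝕜 := ℂ) _
    _ = ((2 ^ N : ℂ) * ∑ j, ⟪w j, w j⟫).re := by rw [← hsum, Complex.re_sum]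
    _ = 2 ^ N * ∑ j, ‖w j‖ ^ 2 := by
        have : ((2:ℂ) ^ N) = ((2 ^ N : ℝ) : ℂ) := by push_cast; ring
        rw [this, Complex.re_ofReal_mul, Complex.re_sum]
        congr 1
        refine Finset.sum_congr rfl fun j _ => ?_
        exact (norm_sq_eq_re_inner (𝕜 := ℂ) _).symm

lemma bessel_of_unimodular {H : Type*} [NormedAddCommGroup H] [InnerProductSpace ℂ H]
    {N : ℕ} (a : Fin N → ℂ) (g : Fin N → H) (M : ℝ) (hM : 0 ≤ M)
    (h : ∀ ε : Fin N → ℂ, (∀ j, ‖ε j‖ = 1) → ‖∑ j, (ε j * a j) • g j‖ ≤ M) :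
    ∑ j, ‖a j‖ ^ 2 * ‖g j‖ ^ 2 ≤ M ^ 2 := by
  set w : Fin N → H := fun j => a j • g j with hw
  have havg := sign_avg N w
  have hbd : ∑ b : Fin N → Bool, ‖∑ j, sgn' (b j) • w j‖ ^ 2 ≤ 2 ^ N * M ^ 2 := by
    calc ∑ b : Fin N → Bool, ‖∑ j, sgn' (b j) • w j‖ ^ 2
        ≤ ∑ _b : Fin N → Bool, M ^ 2 := by
          refine Finset.sum_le_sum fun b _ => ?_
          have : ∑ j, sgn' (b j) • w j = ∑ j, (sgn' (b j) * a j) • g j := by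
            refine Finset.sum_congr rfl fun j _ => ?_
            rw [hw]; rw [smul_smul]
          rw [this]
          have := h (fun j => sgn' (b j)) (fun j => sgn'_norm (b j))
          exact pow_le_pow_left₀ (norm_nonneg _) this 2
      _ = 2 ^ N * M ^ 2 := by
          rw [Finset.sum_const, Finset.card_univ]
          simp [Fintype.card_fun]
  have h2 : (0:ℝ) < 2 ^ N := by positivity
  have : ∑ j, ‖w j‖ ^ 2 ≤ M ^ 2 := by
    rw [havg] at hbd
    nlinarith
  calc ∑ j, ‖a j‖ ^ 2 * ‖g j‖ ^ 2 = ∑ j, ‖w j‖ ^ 2 := by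
        refine Finset.sum_congr rfl fun j _ => ?_
        rw [hw, norm_smul, mul_pow]
      _ ≤ M ^ 2 := this



/-- If `‖xⱼ‖·‖fⱼ‖ ≥ b` for all `j` and the unconditional multiplier bound `C` holds,
then with `dⱼ = ‖xⱼ‖^(-1/2) ‖fⱼ‖^(1/2)`, both `(dⱼ xⱼ)` and `(dⱼ⁻¹ fⱼ)` are Bessel with
Bessel bound `b⁻¹ C²`. -/
theorem bessel_bound_parallelogram
    {H : Type*} [NormedAddCommGroup H] [InnerProductSpace ℂ H]
    (b C : ℝ) (hb : 0 < b) (hC : 0 < C) (N : ℕ) (x f : Fin N → H)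
    (hnorm : ∀ j, b ≤ ‖x j‖ * ‖f j‖)
    (hunc : ∀ (v : H) (ε : Fin N → ℂ), (∀ j, ‖ε j‖ = 1) →
      ‖∑ j, (ε j * ⟪v, f j⟫) • x j‖ ≤ C * ‖v‖)
    (d : Fin N → ℝ)
    (hd : ∀ j, d j = ‖x j‖ ^ (-(1 / 2) : ℝ) * ‖f j‖ ^ ((1 / 2) : ℝ)) :
    (∀ v : H, ∑ j, ‖⟪v, (d j : ℂ) • x j⟫‖ ^ 2 ≤ b⁻¹ * C ^ 2 * ‖v‖ ^ 2) ∧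
    (∀ v : H, ∑ j, ‖⟪v, ((d j : ℂ))⁻¹ • f j⟫‖ ^ 2 ≤ b⁻¹ * C ^ 2 * ‖v‖ ^ 2) := by
  have hx : ∀ j, 0 < ‖x j‖ := fun j => by
    nlinarith [hnorm j, norm_nonneg (x j), norm_nonneg (f j)]
  have hf : ∀ j, 0 < ‖f j‖ := fun j => by
    nlinarith [hnorm j, norm_nonneg (x j), norm_nonneg (f j)]
  have hdpos : ∀ j, 0 < d j := fun j => by
    rw [hd j]
    exact mul_pos (Real.rpow_pos_of_pos (hx j) _) (Real.rpow_pos_of_pos (hf j) _)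
  have hd2 : ∀ j, d j ^ 2 = ‖f j‖ / ‖x j‖ := by
    intro j
    rw [hd j, mul_pow, ← Real.rpow_natCast (‖x j‖ ^ (-(1 / 2) : ℝ)) 2,
      ← Real.rpow_natCast (‖f j‖ ^ ((1 / 2) : ℝ)) 2,
      ← Real.rpow_mul (norm_nonneg _), ← Real.rpow_mul (norm_nonneg _)]
    norm_num
    rw [Real.rpow_neg_one]
    field_simp
  -- the adjoint multiplier bound
  have hadj : ∀ (v : H) (ε : Fin N → ℂ), (∀ j, ‖ε j‖ = 1) →
      ‖∑ j, (ε j * ⟪v, x j⟫) • f j‖ ≤ C * ‖v‖ := by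
    intro v ε hε
    set u : H := ∑ j, (ε j * ⟪v, x j⟫) • f j with hu
    rcases eq_or_ne u 0 with h0 | h0
    · rw [h0, norm_zero]; positivity
    have hu0 : 0 < ‖u‖ := norm_pos_iff.mpr h0
    have key1 : (⟪u, u⟫ : ℂ) = ∑ j, (ε j * ⟪v, x j⟫) * ⟪u, f j⟫ := by
      nth_rewrite 2 [hu]
      rw [inner_sum]
      simp_rw [inner_smul_right]
    have key2 : (⟪v, ∑ j, (ε j * ⟪u, f j⟫) • x j⟫ : ℂ)
        = ∑ j, (ε j * ⟪u, f j⟫) * ⟪v, x j⟫ := by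
      rw [inner_sum]
      simp_rw [inner_smul_right]
    have key : (⟪u, u⟫ : ℂ) = ⟪v, ∑ j, (ε j * ⟪u, f j⟫) • x j⟫ := by
      rw [key1, key2]
      exact Finset.sum_congr rfl fun j _ => by ring
    have h1 : ‖u‖ ^ 2 = ‖(⟪u, u⟫ : ℂ)‖ := by
      rw [@inner_self_eq_norm_sq_to_K ℂ, norm_pow, RCLike.norm_ofReal,
        abs_of_nonneg (norm_nonneg u)]
    have h3 : ‖u‖ ^ 2 ≤ ‖v‖ * (C * ‖u‖) := by
      rw [h1, key]
      calc ‖(⟪v, ∑ j, (ε j * ⟪u, f j⟫) • x j⟫ : ℂ)‖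
          ≤ ‖v‖ * ‖∑ j, (ε j * ⟪u, f j⟫) • x j‖ := norm_inner_le_norm _ _
        _ ≤ ‖v‖ * (C * ‖u‖) :=
            mul_le_mul_of_nonneg_left (hunc u ε hε) (norm_nonneg v)
    nlinarith
  constructor
  · intro v
    have hA := bessel_of_unimodular (fun j => (⟪v, x j⟫ : ℂ)) f (C * ‖v‖)
      (by positivity) (fun ε hε => hadj v ε hε)
    have step : ∀ j, ‖⟪v, (d j : ℂ) • x j⟫‖ ^ 2
        ≤ b⁻¹ * (‖⟪v, x j⟫‖ ^ 2 * ‖f j‖ ^ 2) := by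
      intro j
      rw [inner_smul_right, norm_mul, Complex.norm_real,
        Real.norm_of_nonneg (hdpos j).le, mul_pow, hd2 j]
      have hkey : ‖f j‖ / ‖x j‖ ≤ b⁻¹ * ‖f j‖ ^ 2 := by
        rw [div_le_iff₀ (hx j), inv_mul_eq_div, div_mul_eq_mul_div, le_div_iff₀ hb]
        nlinarith [hnorm j, hf j]
      calc ‖f j‖ / ‖x j‖ * ‖⟪v, x j⟫‖ ^ 2
          ≤ b⁻¹ * ‖f j‖ ^ 2 * ‖⟪v, x j⟫‖ ^ 2 :=
            mul_le_mul_of_nonneg_right hkey (by positivity)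
        _ = b⁻¹ * (‖⟪v, x j⟫‖ ^ 2 * ‖f j‖ ^ 2) := by ring
    calc ∑ j, ‖⟪v, (d j : ℂ) • x j⟫‖ ^ 2
        ≤ ∑ j, b⁻¹ * (‖⟪v, x j⟫‖ ^ 2 * ‖f j‖ ^ 2) :=
          Finset.sum_le_sum fun j _ => step j
      _ = b⁻¹ * ∑ j, ‖⟪v, x j⟫‖ ^ 2 * ‖f j‖ ^ 2 := by rw [Finset.mul_sum]
      _ ≤ b⁻¹ * (C * ‖v‖) ^ 2 :=
          mul_le_mul_of_nonneg_left hA (by positivity)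
      _ = b⁻¹ * C ^ 2 * ‖v‖ ^ 2 := by ring
  · intro v
    have hB := bessel_of_unimodular (fun j => (⟪v, f j⟫ : ℂ)) x (C * ‖v‖)
      (by positivity) (fun ε hε => hunc v ε hε)
    have step : ∀ j, ‖⟪v, ((d j : ℂ))⁻¹ • f j⟫‖ ^ 2
        ≤ b⁻¹ * (‖⟪v, f j⟫‖ ^ 2 * ‖x j‖ ^ 2) := by
      intro j
      rw [inner_smul_right, norm_mul, norm_inv, Complex.norm_real,
        Real.norm_of_nonneg (hdpos j).le, mul_pow, inv_pow, hd2 j]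
      have hkey : (‖f j‖ / ‖x j‖)⁻¹ ≤ b⁻¹ * ‖x j‖ ^ 2 := by
        rw [inv_div, div_le_iff₀ (hf j), inv_mul_eq_div, div_mul_eq_mul_div,
          le_div_iff₀ hb]
        nlinarith [hnorm j, hx j]
      calc (‖f j‖ / ‖x j‖)⁻¹ * ‖⟪v, f j⟫‖ ^ 2
          ≤ b⁻¹ * ‖x j‖ ^ 2 * ‖⟪v, f j⟫‖ ^ 2 :=
            mul_le_mul_of_nonneg_right hkey (by positivity)
        _ = b⁻¹ * (‖⟪v, f j⟫‖ ^ 2 * ‖x j‖ ^ 2) := by ring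
    calc ∑ j, ‖⟪v, ((d j : ℂ))⁻¹ • f j⟫‖ ^ 2
        ≤ ∑ j, b⁻¹ * (‖⟪v, f j⟫‖ ^ 2 * ‖x j‖ ^ 2) :=
          Finset.sum_le_sum fun j _ => step j
      _ = b⁻¹ * ∑ j, ‖⟪v, f j⟫‖ ^ 2 * ‖x j‖ ^ 2 := by rw [Finset.mul_sum]
      _ ≤ b⁻¹ * (C * ‖v‖) ^ 2 :=
          mul_le_mul_of_nonneg_left hB (by positivity)
      _ = b⁻¹ * C ^ 2 * ‖v‖ ^ 2 := by ring
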